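/- Every finite subgroup of odd order of PGL(2, ℝ) is cyclic. -/

import Mathlib

open Matrix


lemma center_iff (z : GL (Fin 2) ℝ) :
    z ∈ Subgroup.center (GL (Fin 2) ℝ) ↔ ∃ r : ℝ, (z : Matrix (Fin 2) (Fin 2) ℝ) = r • (1 : Matrix (Fin 2) (Fin 2) ℝ) := by
  constructor
  · intro hz
    rw [Subgroup.mem_center_iff] at hz
    set Z : Matrix (Fin 2) (Fin 2) ℝ := (z : Matrix (Fin 2) (Fin 2) ℝ) with hZ
    have hU : (⟨!![1,1;0,1], !![1,-1;0,1],
        by rw [Matrix.mul_fin_two, Matrix.one_fin_two]; norm_num,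
        by rw [Matrix.mul_fin_two, Matrix.one_fin_two]; norm_num⟩ : GL (Fin 2) ℝ) * z = z * _ := hz _
    have hL : (⟨!![1,0;1,1], !![1,0;-1,1],
        by rw [Matrix.mul_fin_two, Matrix.one_fin_two]; norm_num,
        by rw [Matrix.mul_fin_two, Matrix.one_fin_two]; norm_num⟩ : GL (Fin 2) ℝ) * z = z * _ := hz _
    have hU' : !![1,1;0,1] * Z = Z * !![1,1;0,1] := congrArg Units.val hU
    have hL' : !![1,0;1,1] * Z = Z * !![1,0;1,1] := congrArg Units.val hL
    rw [Matrix.eta_fin_two Z, Matrix.mul_fin_two, Matrix.mul_fin_two] at hU' hL'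
    simp only [← Matrix.ext_iff, Fin.forall_fin_two] at hU' hL'
    simp only [Matrix.of_apply, Matrix.cons_val', Matrix.cons_val_zero, Matrix.cons_val_one, Matrix.head_cons, Matrix.empty_val', Matrix.cons_val_fin_one, Matrix.head_fin_const] at hU' hL'
    obtain ⟨⟨u1, u2⟩, u3, u4⟩ := hU'
    obtain ⟨⟨l1, l2⟩, l3, l4⟩ := hL'
    refine ⟨Z 0 0, ?_⟩
    rw [Matrix.eta_fin_two Z, Matrix.one_fin_two]
    have e1 : Z 1 0 = 0 := by linarith
    have e2 : Z 0 1 = 0 := by linarith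
    have e3 : Z 1 1 = Z 0 0 := by linarith
    rw [e1, e2, e3]
    ext i j
    fin_cases i <;> fin_cases j <;> simp
  · rintro ⟨r, hr⟩
    rw [Subgroup.mem_center_iff]
    intro g
    ext : 1
    push_cast [Units.val_mul]
    rw [hr]
    simp [Matrix.mul_smul, Matrix.smul_mul]



lemma SL2_cyclic {G : Type*} [Group G] [Finite G]
    (ρ : G →* Matrix.SpecialLinearGroup (Fin 2) ℝ) (hρ : Function.Injective ρ) :
    IsCyclic G := by
  classical
  cases nonempty_fintype G
  set M : G → Matrix (Fin 2) (Fin 2) ℝ :=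
    fun g => ((ρ g : Matrix.SpecialLinearGroup (Fin 2) ℝ) : Matrix (Fin 2) (Fin 2) ℝ) with hM
  have hMmul : ∀ g h, M (g * h) = M g * M h := by intro g h; simp [hM]
  have hM1 : M 1 = 1 := by simp [hM]
  have hMdet : ∀ g, (M g).det = 1 := fun g => (ρ g).property
  set S : Matrix (Fin 2) (Fin 2) ℝ := ∑ g : G, (M g)ᵀ * M g with hS
  have hinv : ∀ h, (M h)ᵀ * S * M h = S := by
    intro h
    calc (M h)ᵀ * S * M h = ∑ g : G, (M h)ᵀ * ((M g)ᵀ * M g) * M h := by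
          rw [hS, Finset.mul_sum, Finset.sum_mul]
      _ = ∑ g : G, (M (g * h))ᵀ * M (g * h) := by
          refine Finset.sum_congr rfl fun g _ => ?_
          rw [hMmul, Matrix.transpose_mul]
          simp only [Matrix.mul_assoc]
      _ = S := by
          rw [hS]
          exact Fintype.sum_equiv (Equiv.mulRight h) _ _ (fun g => rfl)
  set a : ℝ := S 0 0 with hadef
  set b : ℝ := S 0 1 with hbdef
  set c : ℝ := S 1 1 with hcdef
  have ha : a = ∑ g : G, ((M g 0 0)^2 + (M g 1 0)^2) := by
    rw [hadef, hS]
    simp [Matrix.sum_apply, Matrix.mul_apply, Fin.sum_univ_two, sq]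
  have hb : b = ∑ g : G, (M g 0 0 * M g 0 1 + M g 1 0 * M g 1 1) := by
    rw [hbdef, hS]
    simp [Matrix.sum_apply, Matrix.mul_apply, Fin.sum_univ_two]
  have hc : c = ∑ g : G, ((M g 0 1)^2 + (M g 1 1)^2) := by
    rw [hcdef, hS]
    simp [Matrix.sum_apply, Matrix.mul_apply, Fin.sum_univ_two, sq]
  have hsym : S 1 0 = b := by
    rw [hbdef, hS]
    simp [Matrix.sum_apply, Matrix.mul_apply, Fin.sum_univ_two, mul_comm]
  have ha1 : 1 ≤ a := by
    rw [ha]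
    have h1 : ((M 1 0 0)^2 + (M 1 1 0)^2) = 1 := by rw [hM1]; norm_num [Matrix.one_apply]
    calc (1:ℝ) = (M 1 0 0)^2 + (M 1 1 0)^2 := h1.symm
      _ ≤ ∑ g : G, ((M g 0 0)^2 + (M g 1 0)^2) :=
          Finset.single_le_sum (f := fun g : G => (M g 0 0)^2 + (M g 1 0)^2)
            (fun i _ => by positivity) (Finset.mem_univ (1 : G))
  have key : a * (a * c - b^2)
      = ∑ g : G, (((-b) * M g 0 0 + a * M g 0 1)^2 + ((-b) * M g 1 0 + a * M g 1 1)^2) := by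
    have expand : ∀ g : G, (((-b) * M g 0 0 + a * M g 0 1)^2 + ((-b) * M g 1 0 + a * M g 1 1)^2)
        = b^2 * ((M g 0 0)^2 + (M g 1 0)^2)
          - (2*a*b) * (M g 0 0 * M g 0 1 + M g 1 0 * M g 1 1)
          + a^2 * ((M g 0 1)^2 + (M g 1 1)^2) := fun g => by ring
    rw [Finset.sum_congr rfl (fun g _ => expand g), Finset.sum_add_distrib,
      Finset.sum_sub_distrib, ← Finset.mul_sum, ← Finset.mul_sum, ← Finset.mul_sum,
      ← ha, ← hb, ← hc]
    ring
  have keyge : b^2 + a^2 ≤ a * (a * c - b^2) := by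
    rw [key]
    have h1 : (((-b) * M 1 0 0 + a * M 1 0 1)^2 + ((-b) * M 1 1 0 + a * M 1 1 1)^2)
        = b^2 + a^2 := by rw [hM1]; norm_num [Matrix.one_apply]
    calc b^2 + a^2 = _ := h1.symm
      _ ≤ _ := Finset.single_le_sum
          (f := fun g : G => (((-b) * M g 0 0 + a * M g 0 1)^2 + ((-b) * M g 1 0 + a * M g 1 1)^2))
          (fun i _ => by positivity) (Finset.mem_univ (1 : G))
  have hD : 0 < a * c - b^2 := by nlinarith
  have ha0 : (0:ℝ) < a := by linarith
  set P : Matrix (Fin 2) (Fin 2) ℝ :=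
    !![Real.sqrt a, b / Real.sqrt a; 0, Real.sqrt (a*c - b^2) / Real.sqrt a] with hP
  have hsa : 0 < Real.sqrt a := Real.sqrt_pos.mpr ha0
  have hsD : 0 < Real.sqrt (a*c - b^2) := Real.sqrt_pos.mpr hD
  have hPdet : P.det = Real.sqrt (a*c - b^2) := by
    rw [hP, Matrix.det_fin_two_of]
    field_simp
    ring
  have hPdet0 : P.det ≠ 0 := by rw [hPdet]; exact ne_of_gt hsD
  have hPTP : Pᵀ * P = S := by
    have hSeta : S = !![a, b; b, c] := by
      rw [Matrix.eta_fin_two S, hsym, ← hadef, ← hbdef, ← hcdef]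
    rw [hSeta]
    ext i j
    fin_cases i <;> fin_cases j <;>
      · simp [hP, Matrix.mul_apply, Fin.sum_univ_two, Matrix.transpose_apply,
          Matrix.vecHead, Matrix.vecTail]
        field_simp
        try nlinarith [Real.mul_self_sqrt ha0.le, Real.mul_self_sqrt hD.le, hsa, hsD]
  have hPPinv : P * P⁻¹ = 1 := Matrix.mul_nonsing_inv P hPdet0.isUnit
  have hPinvP : P⁻¹ * P = 1 := Matrix.nonsing_inv_mul P hPdet0.isUnit
  have hPTinv : (P⁻¹)ᵀ * Pᵀ = 1 := by
    rw [← Matrix.transpose_mul, hPPinv, Matrix.transpose_one]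
  set N : G → Matrix (Fin 2) (Fin 2) ℝ := fun g => P * M g * P⁻¹ with hN
  have hNorth : ∀ g, (N g)ᵀ * N g = 1 := by
    intro g
    calc (N g)ᵀ * N g
        = (P⁻¹)ᵀ * ((M g)ᵀ * (Pᵀ * P) * M g) * P⁻¹ := by
          rw [hN]
          simp only [Matrix.transpose_mul, Matrix.mul_assoc]
      _ = (P⁻¹)ᵀ * (Pᵀ * P) * P⁻¹ := by rw [hPTP, hinv g]
      _ = ((P⁻¹)ᵀ * Pᵀ) * (P * P⁻¹) := by simp only [Matrix.mul_assoc]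
      _ = 1 := by rw [hPTinv, hPPinv, Matrix.one_mul]
  have hNdet : ∀ g, (N g).det = 1 := by
    intro g
    rw [hN]
    simp only [Matrix.det_mul, hMdet, Matrix.det_nonsing_inv]
    rw [Ring.inverse_eq_inv']
    field_simp
  have hNmul : ∀ g h, N (g * h) = N g * N h := by
    intro g h
    rw [hN]
    simp only [hMmul]
    simp only [Matrix.mul_assoc]
    rw [← Matrix.mul_assoc P⁻¹ P, hPinvP, Matrix.one_mul]
  have hN1 : N 1 = 1 := by rw [hN]; simp only [hM1, Matrix.mul_one, hPPinv]
  have hform : ∀ g, N g 1 1 = N g 0 0 ∧ N g 0 1 = - (N g 1 0) := by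
    intro g
    have hinvform : (N g)⁻¹ = (N g)ᵀ := Matrix.inv_eq_left_inv (hNorth g)
    have hadj : (N g)⁻¹ = (N g).adjugate := by
      rw [Matrix.inv_def, hNdet g]
      simp
    have h2 : (N g)ᵀ = (N g).adjugate := by rw [← hinvform, hadj]
    rw [Matrix.adjugate_fin_two] at h2
    constructor
    · have := congrFun (congrFun h2 0) 0
      simpa using this.symm
    · have := congrFun (congrFun h2 1) 0
      simpa using this
  set f : G →* ℂ :=
    { toFun := fun g => (N g 0 0 : ℂ) + (N g 1 0 : ℂ) * Complex.I
      map_one' := by show (N 1 0 0 : ℂ) + (N 1 1 0 : ℂ) * Complex.I = 1; rw [hN1]; norm_num [Matrix.one_apply]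
      map_mul' := by
        intro g h
        show (N (g*h) 0 0 : ℂ) + (N (g*h) 1 0 : ℂ) * Complex.I
          = ((N g 0 0 : ℂ) + (N g 1 0 : ℂ) * Complex.I) * ((N h 0 0 : ℂ) + (N h 1 0 : ℂ) * Complex.I)
        have e00 : N (g*h) 0 0 = N g 0 0 * N h 0 0 - N g 1 0 * N h 1 0 := by
          rw [hNmul g h, Matrix.mul_apply, Fin.sum_univ_two, (hform g).2]
          try ring
        have e10 : N (g*h) 1 0 = N g 1 0 * N h 0 0 + N g 0 0 * N h 1 0 := by
          rw [hNmul g h, Matrix.mul_apply, Fin.sum_univ_two, (hform g).1]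
          try ring
        rw [e00, e10]
        push_cast
        ring_nf
        rw [Complex.I_sq]
        ring } with hf
  have hfinj : Function.Injective f := by
    rw [injective_iff_map_eq_one]
    intro g hg
    have hre : N g 0 0 = 1 ∧ N g 1 0 = 0 := by
      have h1 : ((N g 0 0 : ℂ) + (N g 1 0 : ℂ) * Complex.I) = 1 := hg
      rw [Complex.ext_iff] at h1
      simpa using h1
    have hNg1 : N g = 1 := by
      ext i j
      fin_cases i <;> fin_cases j <;>
        simp [hre.1, hre.2, (hform g).1, (hform g).2, Matrix.one_apply]
    have hMg1 : M g = 1 := by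
      have h3 : P⁻¹ * (P * M g * P⁻¹) * P = P⁻¹ * 1 * P := by rw [show P * M g * P⁻¹ = N g from rfl, hNg1]
      rw [Matrix.mul_one, hPinvP] at h3
      calc M g = (P⁻¹ * P) * M g * (P⁻¹ * P) := by
            rw [hPinvP, Matrix.one_mul, Matrix.mul_one]
        _ = P⁻¹ * (P * M g * P⁻¹) * P := by simp only [Matrix.mul_assoc]
        _ = 1 := h3
    have : ρ g = 1 := Subtype.ext hMg1
    exact hρ (by rw [this, _root_.map_one])
  exact isCyclic_of_subgroup_isDomain f hfinj


/-- The projective general linear group `PGL(n, R)`: the quotient of `GL(n, R)`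
by its center (the scalar matrices). -/
abbrev PGL (n : ℕ) (R : Type*) [CommRing R] : Type _ :=
  GL (Fin n) R ⧸ Subgroup.center (GL (Fin n) R)

/-- Every finite subgroup of odd order of `PGL(2, ℝ)` is cyclic. -/
theorem odd_subgroup_PGL2_isCyclic (H : Subgroup (PGL 2 ℝ)) [Finite H]
    (hodd : Odd (Nat.card H)) : IsCyclic H := by
  classical
  set π : GL (Fin 2) ℝ →* PGL 2 ℝ := QuotientGroup.mk' (Subgroup.center (GL (Fin 2) ℝ)) with hπ
  set φ : Matrix.SpecialLinearGroup (Fin 2) ℝ →* PGL 2 ℝ :=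
    π.comp Matrix.SpecialLinearGroup.toGL with hφ
  set n := Nat.card H with hn
  have hn0 : 0 < n := Nat.card_pos
  have root : ∀ x : ℝ, ∃ t : ℝ, t ^ n = x := by
    intro x
    rcases le_or_gt 0 x with hx | hx
    · exact ⟨x ^ ((n : ℝ)⁻¹), Real.rpow_inv_natCast_pow hx hn0.ne'⟩
    · obtain ⟨t, ht⟩ : ∃ t : ℝ, t ^ n = -x :=
        ⟨(-x) ^ ((n : ℝ)⁻¹), Real.rpow_inv_natCast_pow (by linarith) hn0.ne'⟩
      exact ⟨-t, by rw [Odd.neg_pow hodd, ht, neg_neg]⟩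
  have hrange : ∀ h ∈ H, ∃ A : Matrix.SpecialLinearGroup (Fin 2) ℝ, φ A = h := by
    intro h hh
    have hpow : h ^ n = 1 := by
      have h1 : (⟨h, hh⟩ : H) ^ n = 1 := pow_card_eq_one'
      have h2 := congrArg Subtype.val h1
      simpa using h2
    obtain ⟨B, hB⟩ := QuotientGroup.mk'_surjective (Subgroup.center (GL (Fin 2) ℝ)) h
    have hBn : (B ^ n) ∈ Subgroup.center (GL (Fin 2) ℝ) := by
      rw [← QuotientGroup.eq_one_iff]
      show π (B ^ n) = 1
      rw [map_pow, hB, hpow]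
    obtain ⟨r, hr⟩ := (center_iff _).mp hBn
    have hr0 : r ≠ 0 := by
      intro h0
      have hu : IsUnit ((B ^ n : GL (Fin 2) ℝ) : Matrix (Fin 2) (Fin 2) ℝ).det :=
        (Matrix.isUnit_iff_isUnit_det _).mp (B ^ n).isUnit
      rw [hr, h0] at hu
      simp at hu
    obtain ⟨t, ht⟩ := root r⁻¹
    have ht0 : t ≠ 0 := by
      intro h0
      rw [h0] at ht
      simp [hn0.ne'] at ht
      exact hr0 ht.symm
    set C : Matrix (Fin 2) (Fin 2) ℝ := t • (B : Matrix (Fin 2) (Fin 2) ℝ) with hC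
    have hCn : C ^ n = 1 := by
      rw [hC, smul_pow, ht]
      have : ((B : Matrix (Fin 2) (Fin 2) ℝ)) ^ n = ((B ^ n : GL (Fin 2) ℝ) : Matrix (Fin 2) (Fin 2) ℝ) := by
        rw [Units.val_pow_eq_pow_val]
      rw [this, hr, smul_smul, inv_mul_cancel₀ hr0, one_smul]
    have hCdet : C.det = 1 := by
      have h1 : C.det ^ n = 1 := by rw [← Matrix.det_pow, hCn, Matrix.det_one]
      exact (Odd.strictMono_pow hodd).injective (by rw [h1, one_pow])
    refine ⟨⟨C, hCdet⟩, ?_⟩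
    have hz : Matrix.SpecialLinearGroup.toGL (⟨C, hCdet⟩ : Matrix.SpecialLinearGroup (Fin 2) ℝ) * B⁻¹
        ∈ Subgroup.center (GL (Fin 2) ℝ) := by
      refine (center_iff _).mpr ⟨t, ?_⟩
      show C * (B.inv) = t • 1
      rw [hC, Matrix.smul_mul, B.val_inv]
    calc φ (⟨C, hCdet⟩ : Matrix.SpecialLinearGroup (Fin 2) ℝ)
        = π (Matrix.SpecialLinearGroup.toGL ⟨C, hCdet⟩) := rfl
      _ = π ((Matrix.SpecialLinearGroup.toGL ⟨C, hCdet⟩ * B⁻¹) * B) := by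
          rw [inv_mul_cancel_right]
      _ = π (Matrix.SpecialLinearGroup.toGL ⟨C, hCdet⟩ * B⁻¹) * π B := map_mul _ _ _
      _ = h := by
          have : π (Matrix.SpecialLinearGroup.toGL ⟨C, hCdet⟩ * B⁻¹) = 1 :=
            (QuotientGroup.eq_one_iff _).mpr hz
          rw [this, one_mul, hB]
  -- the lifted subgroup
  set ψ : (H.comap φ) →* H := φ.subgroupComap H with hψ
  have hker : ∀ A : Matrix.SpecialLinearGroup (Fin 2) ℝ, φ A = 1 →
      ((A : Matrix (Fin 2) (Fin 2) ℝ) = 1 ∨ (A : Matrix (Fin 2) (Fin 2) ℝ) = -1) := by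
    intro A hA
    have hc : Matrix.SpecialLinearGroup.toGL A ∈ Subgroup.center (GL (Fin 2) ℝ) :=
      (QuotientGroup.eq_one_iff _).mp hA
    obtain ⟨r, hr⟩ := (center_iff _).mp hc
    have hAv : (A : Matrix (Fin 2) (Fin 2) ℝ) = r • 1 := hr
    have hdet : ((A : Matrix (Fin 2) (Fin 2) ℝ)).det = 1 := A.property
    rw [hAv] at hdet
    simp [Matrix.det_smul] at hdet
    rcases hdet with h1 | h1
    · left; rw [hAv, h1, one_smul]
    · right; rw [hAv, h1]; simp
  have hone_ne : (1 : Matrix (Fin 2) (Fin 2) ℝ) ≠ -1 := by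
    intro hcon
    have := congrFun (congrFun hcon 0) 0
    norm_num [Matrix.one_apply] at this
  have hkerfin : Finite ψ.ker := by
    apply Finite.of_injective
      (fun x : ψ.ker => ((((x : H.comap φ) : Matrix.SpecialLinearGroup (Fin 2) ℝ) :
        Matrix (Fin 2) (Fin 2) ℝ) = 1 : Prop))
    intro x y hxy
    have hxy' : ((((x : H.comap φ) : Matrix.SpecialLinearGroup (Fin 2) ℝ) :
        Matrix (Fin 2) (Fin 2) ℝ) = 1) = ((((y : H.comap φ) : Matrix.SpecialLinearGroup (Fin 2) ℝ) :
        Matrix (Fin 2) (Fin 2) ℝ) = 1) := hxy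
    have hx1 : φ (x : H.comap φ) = 1 := by
      have := x.property
      rw [MonoidHom.mem_ker] at this
      exact congrArg Subtype.val this
    have hy1 : φ (y : H.comap φ) = 1 := by
      have := y.property
      rw [MonoidHom.mem_ker] at this
      exact congrArg Subtype.val this
    have hx := hker _ hx1
    have hy := hker _ hy1
    have : (((x : H.comap φ) : Matrix.SpecialLinearGroup (Fin 2) ℝ) :
        Matrix (Fin 2) (Fin 2) ℝ) = (((y : H.comap φ) : Matrix.SpecialLinearGroup (Fin 2) ℝ) :
        Matrix (Fin 2) (Fin 2) ℝ) := by
      rcases hx with hx | hx <;> rcases hy with hy | hy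
      · rw [hx, hy]
      · exfalso
        have hy1' : (((y : H.comap φ) : Matrix.SpecialLinearGroup (Fin 2) ℝ) :
            Matrix (Fin 2) (Fin 2) ℝ) = 1 := by rw [← hxy']; exact hx
        exact hone_ne (hy1'.symm.trans hy)
      · exfalso
        have hx1' : (((x : H.comap φ) : Matrix.SpecialLinearGroup (Fin 2) ℝ) :
            Matrix (Fin 2) (Fin 2) ℝ) = 1 := by rw [hxy']; exact hy
        exact hone_ne (hx1'.symm.trans hx)
      · rw [hx, hy]
    exact Subtype.ext (Subtype.ext (Subtype.ext this))
  haveI := hkerfin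
  haveI hqfin : Finite ((H.comap φ) ⧸ ψ.ker) :=
    Finite.of_injective (QuotientGroup.kerLift ψ) (QuotientGroup.kerLift_injective ψ)
  haveI hfin : Finite (H.comap φ) :=
    Finite.of_equiv _ (Subgroup.groupEquivQuotientProdSubgroup (s := ψ.ker)).symm
  haveI hcyc : IsCyclic (H.comap φ) :=
    SL2_cyclic (H.comap φ).subtype Subtype.val_injective
  have hsurj : Function.Surjective ψ := by
    rintro ⟨h, hh⟩
    obtain ⟨A, hA⟩ := hrange h hh
    refine ⟨⟨A, ?_⟩, ?_⟩
    · rw [Subgroup.mem_comap, hA]; exact hh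
    · exact Subtype.ext hA
  exact isCyclic_of_surjective ψ hsurj
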